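/- For every integer m ≥ 0 and every nonzero complex number λ, the finite Fourier transform of the Chebyshev polynomial satisfies ∫_{-1}^1 e^{-iλx} T_m(x) dx = (1/(iλ))[e^{iλ}(-1)^m - e^{-iλ} + m K_m(-iλ)], where K_m(z) = ∫_0^π e^{z cos w} sin(m w) dw. -/

import Mathlib

open MeasureTheory Complex Polynomial

/-- `K m z = ∫_0^π e^{z cos w} sin(m w) dw`. -/
noncomputable def K (m : ℕ) (z : ℂ) : ℂ :=
  ∫ w in (0:ℝ)..Real.pi, Complex.exp (z * Real.cos w) * Real.sin (m * w)

private lemma cexp_cos_deriv (z : ℂ) (w : ℝ) :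
    HasDerivAt (fun w : ℝ => Complex.exp (z * Real.cos w))
      (Complex.exp (z * Real.cos w) * (z * (-(Real.sin w)))) w := by
  have h1 : HasDerivAt (fun w : ℝ => ((Real.cos w : ℝ) : ℂ)) ((-(Real.sin w) : ℝ) : ℂ) w :=
    (Real.hasDerivAt_cos w).ofReal_comp
  have h2 := h1.const_mul z
  have := h2.cexp
  push_cast at this
  simpa [mul_comm] using this

private lemma cos_mul_deriv (m : ℕ) (w : ℝ) :
    HasDerivAt (fun w : ℝ => ((Real.cos (m * w) : ℝ) : ℂ))
      (-((m : ℂ) * Real.sin (m * w))) w := by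
  have h1 : HasDerivAt (fun w : ℝ => Real.cos ((m:ℝ) * w)) (-Real.sin ((m:ℝ) * w) * ((m:ℝ) * 1)) w :=
    (Real.hasDerivAt_cos _).comp w ((hasDerivAt_id w).const_mul _)
  have h2 := h1.ofReal_comp
  push_cast at h2 ⊢
  convert h2 using 1
  ring

/-- The finite Fourier transform of the Chebyshev polynomial in terms of `K m`. -/
theorem chebyshev_fourier_via_K (m : ℕ) (l : ℂ) (hl : l ≠ 0) :
    (∫ x in (-1:ℝ)..1, Complex.exp (-Complex.I * l * x) *
        (((Polynomial.Chebyshev.T ℝ m).eval x : ℝ) : ℂ)) =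
      (1 / (Complex.I * l)) *
        (Complex.exp (Complex.I * l) * (-1:ℂ)^m - Complex.exp (-Complex.I * l)
          + m * K m (-Complex.I * l)) := by
  set z : ℂ := -Complex.I * l with hzdef
  have hz : z ≠ 0 := by
    simp [hzdef, hl, Complex.I_ne_zero]
  clear_value z
  -- continuity facts
  have hcont1 : Continuous fun w : ℝ => Complex.exp (z * Real.cos w) *
      ((Real.cos (m * w) : ℝ) : ℂ) := by
    fun_prop
  have hcont2 : Continuous fun w : ℝ => Complex.exp (z * Real.cos w) *
      ((Real.sin (m * w) : ℝ) : ℂ) := by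
    fun_prop
  have hcont3 : Continuous fun w : ℝ => ((Real.sin w : ℝ) : ℂ) *
      (Complex.exp (z * Real.cos w) * ((Real.cos (m * w) : ℝ) : ℂ)) := by
    fun_prop
  -- Step 1: substitution x = cos w
  have hsub : (∫ x in (-1:ℝ)..1, Complex.exp (z * x) *
        (((Polynomial.Chebyshev.T ℝ m).eval x : ℝ) : ℂ))
      = ∫ w in (0:ℝ)..Real.pi, ((Real.sin w : ℝ) : ℂ) *
          (Complex.exp (z * Real.cos w) * ((Real.cos (m * w) : ℝ) : ℂ)) := by
    have hg : Continuous fun x : ℝ => Complex.exp (z * x) *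
        (((Polynomial.Chebyshev.T ℝ m).eval x : ℝ) : ℂ) := by
      fun_prop
    have hcv := intervalIntegral.integral_comp_smul_deriv
      (f := Real.cos) (f' := fun w => -Real.sin w)
      (g := fun x : ℝ => Complex.exp (z * x) *
        (((Polynomial.Chebyshev.T ℝ m).eval x : ℝ) : ℂ))
      (a := 0) (b := Real.pi)
      (fun x _ => Real.hasDerivAt_cos x)
      (Real.continuous_sin.neg.continuousOn) hg
    rw [Real.cos_zero, Real.cos_pi] at hcv
    rw [intervalIntegral.integral_symm 1 (-1), ← hcv, ← intervalIntegral.integral_neg]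
    apply intervalIntegral.integral_congr
    intro w _
    simp only [Function.comp_apply, neg_smul, neg_neg, real_smul]
    push_cast
    rw [Polynomial.Chebyshev.T_complex_cos]
    push_cast
    ring
  -- Step 2: FTC for G w = -(1/z) * exp(z cos w) * cos(m w)
  have hftc : (∫ w in (0:ℝ)..Real.pi,
        (((Real.sin w : ℝ) : ℂ) * (Complex.exp (z * Real.cos w) * ((Real.cos (m * w) : ℝ) : ℂ))
          + (m / z) * (Complex.exp (z * Real.cos w) * ((Real.sin (m * w) : ℝ) : ℂ))))
      = (-(1/z) * Complex.exp (z * Real.cos Real.pi) * ((Real.cos (m * Real.pi) : ℝ) : ℂ))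
        - (-(1/z) * Complex.exp (z * Real.cos 0) * ((Real.cos (m * 0) : ℝ) : ℂ)) := by
    apply intervalIntegral.integral_eq_sub_of_hasDerivAt
      (f := fun w : ℝ => -(1/z) * Complex.exp (z * Real.cos w) * ((Real.cos (m * w) : ℝ) : ℂ))
    · intro w _
      have hprod := ((cexp_cos_deriv z w).mul (cos_mul_deriv m w)).const_mul (-(1/z))
      convert hprod using 1
      · rfl
      · funext y; simp only [Pi.mul_apply]; ring
      linear_combination (-(((Real.sin w : ℝ) : ℂ) * cexp (z * ((Real.cos w : ℝ) : ℂ)) * ((Real.cos ((m : ℝ) * w) : ℝ) : ℂ))) *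
        mul_inv_cancel₀ hz
    · exact ((hcont3.add (continuous_const.mul hcont2)).intervalIntegrable _ _)
  rw [intervalIntegral.integral_add
      (g := fun w : ℝ => (m / z) * (Complex.exp (z * Real.cos w) * ((Real.sin (m * w) : ℝ) : ℂ)))
      (hcont3.intervalIntegrable _ _)
      ((continuous_const.mul hcont2).intervalIntegrable _ _),
    intervalIntegral.integral_const_mul] at hftc
  have hK : (∫ w in (0:ℝ)..Real.pi, Complex.exp (z * Real.cos w) * ((Real.sin (m * w) : ℝ) : ℂ))
      = K m z := by
    rfl
  rw [hK] at hftc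
  have hcosmpi : Real.cos (m * Real.pi) = (-1 : ℝ) ^ m := by
    have := Real.cos_nat_mul_pi_sub 0 m
    simpa using this
  have key : (∫ w in (0:ℝ)..Real.pi, ((Real.sin w : ℝ) : ℂ) *
      (Complex.exp (z * Real.cos w) * ((Real.cos (m * w) : ℝ) : ℂ)))
      = (-(1/z) * Complex.exp (-z) * ((-1:ℂ)^m)) - (-(1/z) * Complex.exp z) - (m / z) * K m z := by
    rw [eq_sub_iff_add_eq, hftc, Real.cos_pi, Real.cos_zero, hcosmpi, mul_zero, Real.cos_zero]
    push_cast
    ring_nf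
  rw [hsub, key]
  have hil : Complex.I * l ≠ 0 := mul_ne_zero Complex.I_ne_zero hl
  have hzz : -z = Complex.I * l := by rw [hzdef]; ring
  rw [show Complex.exp (-z) = Complex.exp (Complex.I * l) by rw [hzz],
    show Complex.exp z = Complex.exp (-(Complex.I * l)) by rw [← hzz, neg_neg]]
  rw [hzdef] at hz ⊢
  field_simp
  ring
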